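/- Under the abstract assumptions on X, D and I, and assuming the compactness condition (3.3) (for every R > 0 and t ∈ [0,T] the set R_R^t := {z ∈ X : D(z_0,z) ≤ R and I(t,z) ≤ R} is sequentially weakly compact), the incremental problem (IP) has at least one solution: there exist z_1, …, z_N ∈ X such that for each k = 1, …, N, z_k minimizes z ↦ I(t_k, z) + D(z_{k-1}, z) over X. -/

import Mathlib

open Filter Topology Set MeasureTheory
open scoped ENNReal

noncomputable section

/-- Weak convergence of a sequence in a normed space: convergence against every
continuous linear functional. -/
def WeakConv {X : Type*} [NormedAddCommGroup X] [NormedSpace ℝ X]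
    (u : ℕ → X) (z : X) : Prop :=
  ∀ f : X →L[ℝ] ℝ, Tendsto (fun n => f (u n)) atTop (𝓝 (f z))

/-- A set is sequentially weakly compact if every sequence in it has a subsequence
converging weakly to a point of the set. -/
def SeqWeaklyCompact {X : Type*} [NormedAddCommGroup X] [NormedSpace ℝ X]
    (S : Set X) : Prop :=
  ∀ u : ℕ → X, (∀ n, u n ∈ S) →
    ∃ z ∈ S, ∃ φ : ℕ → ℕ, StrictMono φ ∧ WeakConv (fun n => u (φ n)) z

/-- The dissipation of the curve `z` on the interval `[s,t]`, defined as the supremum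
over all finite partitions `s = τ₀ < τ₁ < … < τ_N = t` of `∑ⱼ D (z τⱼ₋₁) (z τⱼ)`. -/
def Diss {X : Type*} (D : X → X → ℝ≥0∞) (z : ℝ → X) (s t : ℝ) : ℝ≥0∞ :=
  ⨆ (N : ℕ) (τ : ℕ → ℝ) (_ : τ 0 = s) (_ : τ N = t)
    (_ : ∀ j < N, τ j < τ (j + 1)),
    ∑ j ∈ Finset.range N, D (z (τ j)) (z (τ (j + 1)))

/-- Superadditivity of `liminf` in `ℝ≥0∞`. -/
lemma liminf_add_liminf_le_liminf_add' (f g : ℕ → ℝ≥0∞) :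
    liminf f atTop + liminf g atTop ≤ liminf (fun n => f n + g n) atTop := by
  have hf : Monotone fun n => ⨅ i ≥ n, f i := fun a b hab =>
    le_iInf₂ fun i hi => iInf₂_le i (hab.trans hi)
  have hg : Monotone fun n => ⨅ i ≥ n, g i := fun a b hab =>
    le_iInf₂ fun i hi => iInf₂_le i (hab.trans hi)
  rw [liminf_eq_iSup_iInf_of_nat, liminf_eq_iSup_iInf_of_nat, liminf_eq_iSup_iInf_of_nat,
    ENNReal.iSup_add_iSup_of_monotone hf hg]
  exact iSup_mono fun n => le_iInf₂ fun i hi =>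
    add_le_add (iInf₂_le i hi) (iInf₂_le i hi)

/-- Theorem 3.1 (existence): under the abstract assumptions on `X`, `D`, `I` and the
compactness condition (3.3), the incremental problem (IP) has at least one solution. -/
theorem incremental_problem_has_solution
    {X : Type*} [NormedAddCommGroup X] [NormedSpace ℝ X] [CompleteSpace X]
    (T cD CI : ℝ) (hT : 0 < T) (hcD : 0 < cD) (hCI : 0 < CI)
    -- `D` is a dissipation distance:
    (D : X → X → ℝ≥0∞)
    (hD0 : ∀ z : X, D z z = 0)
    (hDtri : ∀ z1 z2 z3 : X, D z1 z3 ≤ D z1 z2 + D z2 z3)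
    (hDcoer : ∀ z0 z1 : X, ENNReal.ofReal (cD * ‖z1 - z0‖) ≤ D z0 z1)
    (hDlsc : ∀ (u v : ℕ → X) (z w : X), WeakConv u z → WeakConv v w →
      D z w ≤ liminf (fun j => D (u j) (v j)) atTop)
    -- `I` is an energy-storage functional with partial time derivative `DI`:
    (I : ℝ → X → ℝ≥0∞) (DI : ℝ → X → ℝ)
    (hIlsc : ∀ s ∈ Icc (0:ℝ) T, ∀ (u : ℕ → X) (z : X), WeakConv u z →
      I s z ≤ liminf (fun j => I s (u j)) atTop)
    (hIsmooth : ∀ z : X, (∃ s ∈ Icc (0:ℝ) T, I s z ≠ ⊤) →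
      ∀ s ∈ Icc (0:ℝ) T, I s z ≠ ⊤ ∧
        HasDerivWithinAt (fun τ => (I τ z).toReal) (DI s z) (Icc (0:ℝ) T) s ∧
        |DI s z| ≤ CI)
    -- a partition `0 = t 0 < t 1 < … < t N = T` and an initial datum `z0`:
    (N : ℕ) (hN : 1 ≤ N) (t : ℕ → ℝ) (ht0 : t 0 = 0) (htN : t N = T)
    (htlt : ∀ j < N, t j < t (j + 1))
    (z0 : X) (hz0 : I 0 z0 ≠ ⊤)
    -- compactness condition (3.3):
    (hcomp : ∀ R : ℝ, 0 < R → ∀ s ∈ Icc (0:ℝ) T,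
      SeqWeaklyCompact {w : X | D z0 w ≤ ENNReal.ofReal R ∧ I s w ≤ ENNReal.ofReal R}) :
    ∃ z : ℕ → X, z 0 = z0 ∧ ∀ k < N, ∀ w : X,
      I (t (k + 1)) (z (k + 1)) + D (z k) (z (k + 1)) ≤ I (t (k + 1)) w + D (z k) w := by
  -- the partition times are monotone and lie in `[0, T]`
  have hmono : ∀ i j : ℕ, i ≤ j → j ≤ N → t i ≤ t j := by
    intro i j hij hjN
    induction j with
    | zero => simp [Nat.le_zero.mp hij]
    | succ j ih =>
      rcases Nat.lt_or_ge i (j + 1) with h | h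
      · exact (ih (Nat.lt_succ_iff.mp h) ((Nat.le_succ j).trans hjN)).trans
          (le_of_lt (htlt j (Nat.lt_of_succ_le hjN)))
      · have : i = j + 1 := le_antisymm hij h
        simp [this]
  have tmem : ∀ k : ℕ, k ≤ N → t k ∈ Icc (0:ℝ) T := by
    intro k hk
    exact ⟨ht0 ▸ hmono 0 k (Nat.zero_le k) hk, htN ▸ hmono k N hk le_rfl⟩
  -- key existence lemma for one incremental step
  have key : ∀ s : ℝ, s ∈ Icc (0:ℝ) T → ∀ zprev : X,
      (∃ s' ∈ Icc (0:ℝ) T, I s' zprev ≠ ⊤) → D z0 zprev ≠ ⊤ →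
      ∃ z', (∀ w, I s z' + D zprev z' ≤ I s w + D zprev w) ∧
        I s z' ≠ ⊤ ∧ D z0 z' ≠ ⊤ := by
    intro s hs zprev hfin hDfin
    set F : X → ℝ≥0∞ := fun w => I s w + D zprev w with hF
    set m : ℝ≥0∞ := ⨅ w, F w with hm
    have hIprev : I s zprev ≠ ⊤ := (hIsmooth zprev hfin s hs).1
    have hmle : m ≤ I s zprev := by
      have h := iInf_le F zprev
      simpa [F, hD0] using h
    have hmtop : m ≠ ⊤ := ne_top_of_le_ne_top hIprev hmle
    -- minimizing sequence
    have hu : ∀ n : ℕ, ∃ w : X, F w < m + ((n : ℝ≥0∞) + 1)⁻¹ := by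
      intro n
      have h : m < m + ((n : ℝ≥0∞) + 1)⁻¹ := by
        refine ENNReal.lt_add_right hmtop ?_
        simp [ENNReal.inv_ne_zero]
      exact iInf_lt_iff.mp h
    choose u hu using hu
    have hub : ∀ n, F (u n) ≤ m + 1 := by
      intro n
      refine (hu n).le.trans (add_le_add_right ?_ m)
      simp [ENNReal.inv_le_one]
    set K : ℝ≥0∞ := D z0 zprev + (m + 1) with hK
    have hKtop : K ≠ ⊤ := by
      refine ENNReal.add_ne_top.mpr ⟨hDfin, ?_⟩
      exact ENNReal.add_ne_top.mpr ⟨hmtop, ENNReal.one_ne_top⟩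
    have hKle : K ≤ ENNReal.ofReal (K.toReal + 1) :=
      calc K = ENNReal.ofReal K.toReal := (ENNReal.ofReal_toReal hKtop).symm
        _ ≤ ENNReal.ofReal (K.toReal + 1) := ENNReal.ofReal_le_ofReal (by linarith)
    have hmem : ∀ n, u n ∈ {w : X | D z0 w ≤ ENNReal.ofReal (K.toReal + 1) ∧
        I s w ≤ ENNReal.ofReal (K.toReal + 1)} := by
      intro n
      constructor
      · refine le_trans ?_ hKle
        calc D z0 (u n) ≤ D z0 zprev + D zprev (u n) := hDtri _ _ _
          _ ≤ D z0 zprev + F (u n) := add_le_add_right le_add_self _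
          _ ≤ D z0 zprev + (m + 1) := add_le_add_right (hub n) _
      · refine le_trans ?_ hKle
        calc I s (u n) ≤ F (u n) := le_self_add
          _ ≤ m + 1 := hub n
          _ ≤ K := le_add_self
    have hRpos : 0 < K.toReal + 1 := by positivity
    obtain ⟨z', hz'mem, φ, hφ, hweak⟩ := hcomp _ hRpos s hs u hmem
    -- the liminf of the values along the subsequence is at most `m`
    have hlim0 : Tendsto (fun n : ℕ => ((n : ℝ≥0∞) + 1)⁻¹) atTop (𝓝 0) := by
      have h := ENNReal.tendsto_inv_nat_nhds_zero.comp (tendsto_add_atTop_nat 1)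
      have heq : (fun n : ℕ => ((n : ℝ≥0∞) + 1)⁻¹) =
          (fun n : ℕ => ((n : ℝ≥0∞))⁻¹) ∘ (fun a => a + 1) := by
        funext n; simp [Function.comp]
      rw [heq]; exact h
    have hFlim : liminf (fun n => F (u (φ n))) atTop ≤ m := by
      have h1 : ∀ n, F (u (φ n)) ≤ m + ((n : ℝ≥0∞) + 1)⁻¹ := by
        intro n
        refine (hu (φ n)).le.trans (add_le_add_right ?_ m)
        refine ENNReal.inv_le_inv.mpr ?_
        have : (n : ℝ≥0∞) ≤ (φ n : ℝ≥0∞) := by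
          exact_mod_cast Nat.cast_le.mpr hφ.le_apply
        exact add_le_add_left this 1
      calc liminf (fun n => F (u (φ n))) atTop
          ≤ liminf (fun n : ℕ => m + ((n : ℝ≥0∞) + 1)⁻¹) atTop :=
            liminf_le_liminf (Eventually.of_forall h1)
        _ = m := by
            refine Tendsto.liminf_eq ?_
            simpa using Tendsto.add (tendsto_const_nhds (x := m)) hlim0
    have hImin : I s z' ≤ liminf (fun n => I s (u (φ n))) atTop :=
      hIlsc s hs _ z' hweak
    have hDmin : D zprev z' ≤ liminf (fun n => D zprev (u (φ n))) atTop :=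
      hDlsc (fun _ => zprev) (fun n => u (φ n)) zprev z'
        (fun f => tendsto_const_nhds) hweak
    have hFz' : F z' ≤ m :=
      calc F z' ≤ liminf (fun n => I s (u (φ n))) atTop +
            liminf (fun n => D zprev (u (φ n))) atTop := add_le_add hImin hDmin
        _ ≤ liminf (fun n => I s (u (φ n)) + D zprev (u (φ n))) atTop :=
            liminf_add_liminf_le_liminf_add' _ _
        _ ≤ m := hFlim
    refine ⟨z', fun w => hFz'.trans (iInf_le F w), ?_, ?_⟩
    · exact ne_top_of_le_ne_top hmtop (le_self_add.trans hFz')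
    · refine ne_top_of_le_ne_top (ENNReal.add_ne_top.mpr ⟨hDfin, hmtop⟩) ?_
      calc D z0 z' ≤ D z0 zprev + D zprev z' := hDtri _ _ _
        _ ≤ D z0 zprev + m := add_le_add_right (le_add_self.trans hFz') _
  -- recursive construction
  have step : ∀ (k : ℕ) (zp : X), ∃ z' : X,
      (I (t (min k N)) zp ≠ ⊤ ∧ D z0 zp ≠ ⊤) →
      ((∀ w, I (t (min (k + 1) N)) z' + D zp z' ≤ I (t (min (k + 1) N)) w + D zp w) ∧
        I (t (min (k + 1) N)) z' ≠ ⊤ ∧ D z0 z' ≠ ⊤) := by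
    intro k zp
    by_cases h : I (t (min k N)) zp ≠ ⊤ ∧ D z0 zp ≠ ⊤
    · obtain ⟨z', hz'⟩ := key (t (min (k + 1) N)) (tmem _ (min_le_right _ _)) zp
        ⟨t (min k N), tmem _ (min_le_right _ _), h.1⟩ h.2
      exact ⟨z', fun _ => hz'⟩
    · exact ⟨z0, fun hc => absurd hc h⟩
  choose g hg using step
  set z : ℕ → X := fun k => Nat.rec z0 (fun n zn => g n zn) k with hzdef
  have inv : ∀ k, I (t (min k N)) (z k) ≠ ⊤ ∧ D z0 (z k) ≠ ⊤ := by
    intro k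
    induction k with
    | zero =>
      constructor
      · have : min 0 N = 0 := Nat.min_eq_left (Nat.zero_le N)
        rw [this, ht0]
        exact hz0
      · simp [z, hD0]
    | succ k ih =>
      have h := hg k (z k) ih
      exact ⟨h.2.1, h.2.2⟩
  refine ⟨z, rfl, ?_⟩
  intro k hk w
  have h := (hg k (z k) (inv k)).1 w
  have hmin1 : min (k + 1) N = k + 1 := Nat.min_eq_left (Nat.succ_le_of_lt hk)
  rw [hmin1] at h
  exact h
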